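/- (Hermite) Let z_1,…,z_n ∈ ℂ be n distinct complex numbers whose multiset is closed under complex conjugation, and suppose exactly 2λ of them are non-real. Define Q : ℝ^n → ℝ by Q(a_0,…,a_{n−1}) = Re( Σ_{i=1}^n (a_0 + a_1 z_i + ⋯ + a_{n−1} z_i^{n−1})² ) (the sum is in fact real). Then there is a basis v_1,…,v_n of ℝ^n such that Q(c_1 v_1 + ⋯ + c_n v_n) = c_1² + ⋯ + c_{n−λ}² − c_{n−λ+1}² − ⋯ − c_n² for all c ∈ ℝ^n; i.e., when Q is written as a sum of real squares, exactly λ of the squares carry the sign −, where 2λ is the number of imaginary roots. -/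

import Mathlib

open Complex Finset

noncomputable def Lmap (n : ℕ) (z : Fin n → ℂ) (i : Fin n) : (Fin n → ℝ) →ₗ[ℝ] ℂ where
  toFun a := ∑ k : Fin n, (a k : ℂ) * z i ^ (k : ℕ)
  map_add' a b := by
    simp [add_mul, Finset.sum_add_distrib]
  map_smul' c a := by
    simp [Finset.smul_sum, Complex.real_smul, mul_assoc]

noncomputable def Fmap (n : ℕ) (z : Fin n → ℂ) (i : Fin n) : (Fin n → ℝ) →ₗ[ℝ] ℝ :=
  (if (z i).im = 0 then (1 : ℝ) else Real.sqrt 2) •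
    ((if (z i).im < 0 then Complex.imLm else Complex.reLm) ∘ₗ Lmap n z i)

theorem hermite_form_signature (n lam : ℕ) (z : Fin n → ℂ)
    (hz : Function.Injective z)
    (hconj : ∀ i : Fin n, ∃ j : Fin n, z j = starRingEnd ℂ (z i))
    (hlam : ({i : Fin n | (z i).im ≠ 0} : Finset (Fin n)).card = 2 * lam)
    (Q : (Fin n → ℝ) → ℝ)
    (hQ : ∀ a : Fin n → ℝ,
      Q a = (∑ i : Fin n, (∑ k : Fin n, (a k : ℂ) * z i ^ (k : ℕ)) ^ 2).re) :
    ∃ v : Module.Basis (Fin n) ℝ (Fin n → ℝ),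
      ∀ c : Fin n → ℝ,
        Q (∑ j : Fin n, c j • v j)
          = ∑ j : Fin n, (if (j : ℕ) < n - lam then (c j) ^ 2 else -(c j) ^ 2) := by
  classical
  -- the conjugation involution
  set σf : Fin n → Fin n := fun i => (hconj i).choose with hσfdef
  have hzσ : ∀ i, z (σf i) = starRingEnd ℂ (z i) := fun i => (hconj i).choose_spec
  have hσσ : ∀ i, σf (σf i) = i := by
    intro i
    apply hz
    rw [hzσ, hzσ, Complex.conj_conj]
  have himσ : ∀ i, (z (σf i)).im = -(z i).im := by
    intro i; rw [hzσ]; simp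
  have hfix : ∀ i, (z i).im = 0 → σf i = i := by
    intro i h
    apply hz
    rw [hzσ, Complex.conj_eq_iff_im.mpr h]
  have hLσ : ∀ i a, Lmap n z (σf i) a = starRingEnd ℂ (Lmap n z i a) := by
    intro i a
    simp only [Lmap, LinearMap.coe_mk, AddHom.coe_mk, map_sum, map_mul, map_pow,
      Complex.conj_ofReal, hzσ]
  have hrσ : ∀ i a, (Lmap n z (σf i) a).re = (Lmap n z i a).re := by
    intro i a; rw [hLσ]; simp
  have hmσ : ∀ i a, (Lmap n z (σf i) a).im = -(Lmap n z i a).im := by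
    intro i a; rw [hLσ]; simp
  have hm0 : ∀ i a, (z i).im = 0 → (Lmap n z i a).im = 0 := by
    intro i a h
    have := hmσ i a
    rw [hfix i h] at this
    linarith
  -- the key pointwise value of Fmap
  have hFval : ∀ i a, Fmap n z i a
      = (if (z i).im = 0 then (1 : ℝ) else Real.sqrt 2) *
        (if (z i).im < 0 then (Lmap n z i a).im else (Lmap n z i a).re) := by
    intro i a
    simp only [Fmap, LinearMap.smul_apply, smul_eq_mul, LinearMap.comp_apply]
    by_cases h : (z i).im < 0 <;> simp [h]
  have hsqrt2 : Real.sqrt 2 ^ 2 = 2 := Real.sq_sqrt (by norm_num)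
  -- the key identity
  have key : ∀ a : Fin n → ℝ,
      (∑ i : Fin n, (Lmap n z i a) ^ 2).re
        = ∑ i : Fin n, (if (z i).im < 0 then -(Fmap n z i a) ^ 2 else (Fmap n z i a) ^ 2) := by
    intro a
    set r : Fin n → ℝ := fun i => (Lmap n z i a).re with hr
    set m : Fin n → ℝ := fun i => (Lmap n z i a).im with hm
    have hg : ∀ i, (if (z i).im < 0 then -(Fmap n z i a) ^ 2 else (Fmap n z i a) ^ 2)
        = (if (z i).im = 0 then r i ^ 2 else
            if (z i).im < 0 then -(2 * m i ^ 2) else 2 * r i ^ 2) := by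
      intro i
      rw [hFval]
      rcases lt_trichotomy (z i).im 0 with h | h | h
      · simp only [if_pos h, if_neg (ne_of_lt h)]
        rw [mul_pow, hsqrt2]
      · simp [h, one_mul, hr]
      · simp only [if_neg (not_lt.mpr (le_of_lt h)), if_neg (ne_of_gt h)]
        rw [mul_pow, hsqrt2]
    have hre : (∑ i : Fin n, (Lmap n z i a) ^ 2).re = ∑ i : Fin n, (r i ^ 2 - m i ^ 2) := by
      rw [Complex.re_sum]
      refine Finset.sum_congr rfl fun i _ => ?_
      rw [sq, Complex.mul_re, ← sq, ← sq]
    rw [hre]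
    set hfun : Fin n → ℝ := fun i => (r i ^ 2 - m i ^ 2) -
        (if (z i).im = 0 then r i ^ 2 else
          if (z i).im < 0 then -(2 * m i ^ 2) else 2 * r i ^ 2) with hhfun
    have hanti : ∀ i, hfun (σf i) = -hfun i := by
      intro i
      have hrr : r (σf i) = r i := hrσ i a
      have hmm : m (σf i) = -m i := hmσ i a
      rcases lt_trichotomy (z i).im 0 with h | h | h
      · have h1 : (z (σf i)).im = -(z i).im := himσ i
        simp only [hhfun, hrr, hmm, h1, neg_eq_zero, neg_neg, neg_lt_zero]
        rw [if_neg (ne_of_lt h), if_neg (ne_of_lt h), if_pos h,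
          if_neg (not_lt.mpr (le_of_lt h))]
        ring
      · have h2 : m i = 0 := hm0 i a h
        simp only [hhfun, hrr, hmm, himσ i, h, neg_zero, h2]
        simp
      · have h1 : (z (σf i)).im = -(z i).im := himσ i
        simp only [hhfun, hrr, hmm, h1, neg_eq_zero, neg_neg, neg_lt_zero]
        rw [if_neg (ne_of_gt h), if_neg (ne_of_gt h), if_pos h,
          if_neg (not_lt.mpr (le_of_lt h))]
        ring
    have hσe : Function.Involutive σf := hσσ
    have hsum0 : ∑ i : Fin n, hfun i = 0 := by
      have h1 : ∑ i : Fin n, hfun (σf i) = ∑ i : Fin n, hfun i :=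
        Equiv.sum_comp hσe.toPerm hfun
      have h2 : ∑ i : Fin n, hfun (σf i) = -∑ i : Fin n, hfun i := by
        rw [← Finset.sum_neg_distrib]
        exact Finset.sum_congr rfl fun i _ => hanti i
      linarith
    rw [Finset.sum_congr rfl fun i _ => hg i]
    have hsd : ∑ i : Fin n, hfun i
        = (∑ i : Fin n, (r i ^ 2 - m i ^ 2)) - ∑ i : Fin n,
          (if (z i).im = 0 then r i ^ 2 else
            if (z i).im < 0 then -(2 * m i ^ 2) else 2 * r i ^ 2) := by
      rw [← Finset.sum_sub_distrib]
    rw [hsd] at hsum0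
    linarith
  -- the linear map T packaging the n linear forms
  set T : (Fin n → ℝ) →ₗ[ℝ] (Fin n → ℝ) := LinearMap.pi (fun i => Fmap n z i) with hT
  have hker : ∀ a : Fin n → ℝ, (∀ i, Fmap n z i a = 0) → a = 0 := by
    intro a ha
    have hbase : ∀ i, (if (z i).im < 0 then (Lmap n z i a).im else (Lmap n z i a).re) = 0 := by
      intro i
      have h := ha i
      rw [hFval] at h
      rcases mul_eq_zero.mp h with h' | h'
      · exfalso
        by_cases h0 : (z i).im = 0
        · rw [if_pos h0] at h'; exact one_ne_zero h'
        · rw [if_neg h0] at h'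
          exact (Real.sqrt_ne_zero'.mpr (by norm_num)) h'
      · exact h'
    have hrzero : ∀ i, (Lmap n z i a).re = 0 := by
      intro i
      by_cases h : (z i).im < 0
      · have h2 : ¬ (z (σf i)).im < 0 := by rw [himσ]; linarith
        have h3 := hbase (σf i)
        rw [if_neg h2, hrσ] at h3
        exact h3
      · have h3 := hbase i
        rw [if_neg h] at h3
        exact h3
    have hmzero : ∀ i, (Lmap n z i a).im = 0 := by
      intro i
      rcases lt_trichotomy (z i).im 0 with h | h | h
      · have h3 := hbase i
        rw [if_pos h] at h3
        exact h3
      · exact hm0 i a h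
      · have h2 : (z (σf i)).im < 0 := by rw [himσ]; linarith
        have h3 := hbase (σf i)
        rw [if_pos h2, hmσ] at h3
        linarith
    have hL0 : ∀ i, Lmap n z i a = 0 := fun i => Complex.ext (hrzero i) (hmzero i)
    have hv : (fun k : Fin n => (a k : ℂ)) = 0 :=
      Matrix.eq_zero_of_forall_index_sum_mul_pow_eq_zero hz
        (fun j => by simpa [Lmap] using hL0 j)
    funext k
    have hk := congrFun hv k
    rw [Pi.zero_apply] at hk
    exact_mod_cast hk
  have hTinj : Function.Injective T := by
    rw [← LinearMap.ker_eq_bot, LinearMap.ker_eq_bot']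
    intro a ha
    exact hker a fun i => congrFun ha i
  have hTsurj : Function.Surjective T := LinearMap.injective_iff_surjective.mp hTinj
  let e : (Fin n → ℝ) ≃ₗ[ℝ] (Fin n → ℝ) := LinearEquiv.ofBijective T ⟨hTinj, hTsurj⟩
  let b : Module.Basis (Fin n) ℝ (Fin n → ℝ) := (Pi.basisFun ℝ (Fin n)).map e.symm
  have hFb : ∀ i k, Fmap n z i (b k) = if i = k then 1 else 0 := by
    intro i k
    have h1 : T (b k) = Pi.basisFun ℝ (Fin n) k := by
      show e (b k) = _
      simp [b]
    have h2 : Fmap n z i (b k) = T (b k) i := rfl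
    rw [h2, h1]
    simp [Pi.basisFun_apply, Pi.single_apply]
  -- counting
  have hcard2 : (univ.filter fun i : Fin n => (z i).im ≠ 0).card = 2 * lam := by
    simpa using hlam
  have hNP : (univ.filter fun i : Fin n => (z i).im < 0).card
      = (univ.filter fun i : Fin n => 0 < (z i).im).card := by
    apply Finset.card_nbij' (i := fun i => σf i) (j := fun i => σf i)
    · intro i hi
      simp only [Finset.mem_coe, Finset.mem_filter, Finset.mem_univ, true_and] at hi ⊢
      rw [himσ]; linarith
    · intro i hi
      simp only [Finset.mem_coe, Finset.mem_filter, Finset.mem_univ, true_and] at hi ⊢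
      rw [himσ]; linarith
    · intro i _; exact hσσ i
    · intro i _; exact hσσ i
  have hNcard : (univ.filter fun i : Fin n => (z i).im < 0).card = lam := by
    have hunion : (univ.filter fun i : Fin n => (z i).im ≠ 0)
        = (univ.filter fun i : Fin n => (z i).im < 0)
          ∪ (univ.filter fun i : Fin n => 0 < (z i).im) := by
      rw [← Finset.filter_or]
      exact Finset.filter_congr fun i _ => by
        constructor
        · intro h; exact lt_or_gt_of_ne h
        · intro h; rcases h with h | h
          · exact ne_of_lt h
          · exact ne_of_gt h
    have hdisj : Disjoint (univ.filter fun i : Fin n => (z i).im < 0)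
        (univ.filter fun i : Fin n => 0 < (z i).im) := by
      rw [Finset.disjoint_left]
      intro i hi hi2
      simp only [Finset.mem_filter, Finset.mem_univ, true_and] at hi hi2
      linarith
    have hc := hcard2
    rw [hunion, Finset.card_union_of_disjoint hdisj] at hc
    omega
  have h2le : 2 * lam ≤ n := by
    have h := Finset.card_filter_le univ (fun i : Fin n => (z i).im ≠ 0)
    rw [hcard2] at h
    simpa using h
  have hcardlt : ∀ m : ℕ, m ≤ n →
      (univ.filter fun j : Fin n => (j : ℕ) < m).card = m := by
    intro m hm
    have hb : (univ.filter fun j : Fin n => (j : ℕ) < m).card = (Finset.range m).card := by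
      refine Finset.card_bij' (fun (a : Fin n) _ => (a : ℕ))
        (fun k hk => (⟨k, lt_of_lt_of_le (Finset.mem_range.mp hk) hm⟩ : Fin n)) ?_ ?_ ?_ ?_
      · intro a ha
        simp only [Finset.mem_filter, Finset.mem_univ, true_and] at ha
        exact Finset.mem_range.mpr ha
      · intro k hk
        simp only [Finset.mem_filter, Finset.mem_univ, true_and]
        exact Finset.mem_range.mp hk
      · intro a _; rfl
      · intro k _; rfl
    rw [hb, Finset.card_range]
  -- the reindexing permutation
  have hcA : Fintype.card {j : Fin n // ¬ ((j : ℕ) < n - lam)}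
      = Fintype.card {i : Fin n // (z i).im < 0} := by
    rw [Fintype.card_subtype, Fintype.card_subtype]
    have h1 := hcardlt (n - lam) (Nat.sub_le n lam)
    have h2 : (univ.filter fun j : Fin n => ¬ ((j : ℕ) < n - lam)).card
        = n - (n - lam) := by
      have := Finset.card_filter_add_card_filter_not
        (s := (univ : Finset (Fin n))) (p := fun j : Fin n => (j : ℕ) < n - lam)
      rw [h1] at this
      have hn : (univ : Finset (Fin n)).card = n := by simp
      omega
    rw [h2, hNcard]
    omega
  have hcB : Fintype.card {j : Fin n // ¬ ¬ ((j : ℕ) < n - lam)}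
      = Fintype.card {i : Fin n // ¬ (z i).im < 0} := by
    rw [Fintype.card_subtype_compl (p := fun j : Fin n => ¬ ((j : ℕ) < n - lam)),
      Fintype.card_subtype_compl (p := fun i : Fin n => (z i).im < 0), hcA]
  let eA : {j : Fin n // ¬ ((j : ℕ) < n - lam)} ≃ {i : Fin n // (z i).im < 0} :=
    Fintype.equivOfCardEq hcA
  let eB : {j : Fin n // ¬ ¬ ((j : ℕ) < n - lam)} ≃ {i : Fin n // ¬ (z i).im < 0} :=
    Fintype.equivOfCardEq hcB
  let τ : Fin n ≃ Fin n :=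
    ((Equiv.sumCompl (fun j : Fin n => ¬ ((j : ℕ) < n - lam))).symm.trans
      (Equiv.sumCongr eA eB)).trans (Equiv.sumCompl (fun i : Fin n => (z i).im < 0))
  have hτ : ∀ j : Fin n, ((z (τ j)).im < 0) ↔ ¬ ((j : ℕ) < n - lam) := by
    intro j
    by_cases h : (j : ℕ) < n - lam
    · have h1 : (Equiv.sumCompl (fun j : Fin n => ¬ ((j : ℕ) < n - lam))).symm j
          = Sum.inr ⟨j, not_not.mpr h⟩ :=
        Equiv.sumCompl_symm_apply_of_neg
          (p := fun j : Fin n => ¬ ((j : ℕ) < n - lam)) (not_not.mpr h)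
      have h2 : τ j = ↑(eB ⟨j, not_not.mpr h⟩) := by
        simp only [τ, Equiv.trans_apply, h1, Equiv.sumCongr_apply, Sum.map_inr,
          Equiv.sumCompl_apply_inr]
      rw [h2]
      exact iff_of_false (eB ⟨j, not_not.mpr h⟩).2 (not_not.mpr h)
    · have h1 : (Equiv.sumCompl (fun j : Fin n => ¬ ((j : ℕ) < n - lam))).symm j
          = Sum.inl ⟨j, h⟩ :=
        Equiv.sumCompl_symm_apply_of_pos
          (p := fun j : Fin n => ¬ ((j : ℕ) < n - lam)) h
      have h2 : τ j = ↑(eA ⟨j, h⟩) := by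
        simp only [τ, Equiv.trans_apply, h1, Equiv.sumCongr_apply, Sum.map_inl,
          Equiv.sumCompl_apply_inl]
      rw [h2]
      exact iff_of_true (eA ⟨j, h⟩).2 h
  -- the basis
  refine ⟨b.reindex τ.symm, ?_⟩
  intro c
  set a : Fin n → ℝ := ∑ j : Fin n, c j • (b.reindex τ.symm) j with hadef
  have hFa : ∀ i, Fmap n z i a = c (τ.symm i) := by
    intro i
    rw [hadef, map_sum]
    have : ∀ j : Fin n, Fmap n z i (c j • (b.reindex τ.symm) j)
        = if j = τ.symm i then c j else 0 := by
      intro j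
      rw [map_smul, Module.Basis.reindex_apply, Equiv.symm_symm, hFb, smul_eq_mul]
      by_cases h : j = τ.symm i
      · rw [if_pos h, if_pos (by rw [h]; simp), mul_one]
      · rw [if_neg h, if_neg (by
          intro hc
          exact h (by rw [hc, Equiv.symm_apply_apply])), mul_zero]
    rw [Finset.sum_congr rfl fun j _ => this j, Finset.sum_ite_eq' univ (τ.symm i) c,
      if_pos (Finset.mem_univ _)]
  have hQa : Q a = ∑ i : Fin n,
      (if (z i).im < 0 then -(c (τ.symm i)) ^ 2 else (c (τ.symm i)) ^ 2) := by
    rw [hQ]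
    have : (∑ i : Fin n, (∑ k : Fin n, ((a k : ℝ) : ℂ) * z i ^ (k : ℕ)) ^ 2).re
        = (∑ i : Fin n, (Lmap n z i a) ^ 2).re := rfl
    rw [this, key a]
    exact Finset.sum_congr rfl fun i _ => by rw [hFa i]
  rw [hQa, ← Equiv.sum_comp τ
    (fun i => if (z i).im < 0 then -(c (τ.symm i)) ^ 2 else (c (τ.symm i)) ^ 2)]
  refine Finset.sum_congr rfl fun j _ => ?_
  simp only [Equiv.symm_apply_apply]
  by_cases h : (j : ℕ) < n - lam
  · rw [if_neg (fun hc => ((hτ j).mp hc) h), if_pos h]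
  · rw [if_pos ((hτ j).mpr h), if_neg h]
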